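/- In the block composite setting, fix x ∈ E, a block index i, and β > 0. Let C ⊆ E be a convex set containing x and x₊, and suppose ∇_i f is L^f_i-Lipschitz on C and ∇_i F is L^F_i-Lipschitz on C (operator norm), with L^F_i > 0 and β > L^f_i. Assume β ≥ L^f_i + L^F_i √(2 L_h) √(φ(x) − φ^*). Let s₊ be a global minimizer over ℝ^{n_i} of q_β(s) = φ̄^i(s;x) + (β/2)‖s − x^i‖² and set x₊ = x[i↦s₊]. Then ‖∇h(l^i_F(s₊;x))‖ ≤ (β − L^f_i)/L^F_i − L^F_i L_h ‖x₊ − x‖². -/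

import Mathlib

open scoped RealInnerProductSpace

/-- `upd x i s` is `x` with its `i`-th block replaced by `s`, in the Euclidean
product space `E = ℝ^{n 0} × ⋯ × ℝ^{n (b-1)}`. -/
noncomputable def upd {b : ℕ} {n : Fin b → ℕ}
    (x : PiLp 2 (fun i => EuclideanSpace ℝ (Fin (n i)))) (i : Fin b)
    (s : EuclideanSpace ℝ (Fin (n i))) :
    PiLp 2 (fun i => EuclideanSpace ℝ (Fin (n i))) :=
  WithLp.toLp 2 (Function.update x i s)

private lemma le_add_eps {a b : ℝ} (H : ∀ ε : ℝ, 0 < ε → a ≤ b + ε) : a ≤ b := by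
  by_contra hc
  push_neg at hc
  have := H ((a - b) / 2) (by linarith)
  linarith

private lemma oneD {φ ψ : ℝ → ℝ} {c L : ℝ}
    (hd : ∀ t ∈ Set.Icc (0:ℝ) 1, HasDerivAt φ (ψ t) t)
    (hb : ∀ t ∈ Set.Icc (0:ℝ) 1, ψ t ≤ c + L * t) :
    φ 1 ≤ φ 0 + c + L / 2 := by
  set χ : ℝ → ℝ := fun t => c * t + L / 2 * t ^ 2 - (φ t - φ 0) with hχ
  have hdχ : ∀ t ∈ Set.Icc (0:ℝ) 1, HasDerivAt χ (c + L / 2 * (2 * t) - ψ t) t := by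
    intro t ht
    have h1 : HasDerivAt (fun t : ℝ => c * t) (c * 1) t := (hasDerivAt_id t).const_mul c
    have h2 : HasDerivAt (fun t : ℝ => L / 2 * t ^ 2) (L / 2 * (2 * t ^ 1)) t :=
      (hasDerivAt_pow 2 t).const_mul (L / 2)
    have h3 : HasDerivAt (fun t : ℝ => φ t - φ 0) (ψ t) t := (hd t ht).sub_const (φ 0)
    have := (h1.add h2).sub h3
    simpa [hχ, mul_comm, Pi.add_def, Pi.sub_def] using this
  have hmono : MonotoneOn χ (Set.Icc 0 1) := by
    apply monotoneOn_of_deriv_nonneg (convex_Icc 0 1)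
    · intro t ht
      exact (hdχ t ht).continuousAt.continuousWithinAt
    · intro t ht
      rw [interior_Icc] at ht
      exact (hdχ t (Set.mem_Icc_of_Ioo ht)).differentiableAt.differentiableWithinAt
    · intro t ht
      rw [interior_Icc] at ht
      rw [(hdχ t (Set.mem_Icc_of_Ioo ht)).deriv]
      have := hb t (Set.mem_Icc_of_Ioo ht)
      linarith
  have h01 := hmono (Set.left_mem_Icc.2 zero_le_one) (Set.right_mem_Icc.2 zero_le_one) zero_le_one
  simp only [hχ] at h01
  nlinarith [h01]

private lemma descent_lemma {H : Type*} [NormedAddCommGroup H] [InnerProductSpace ℝ H]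
    [CompleteSpace H] {h : H → ℝ} {gh : H → H} {L : ℝ}
    (hg : ∀ u, HasGradientAt h (gh u) u)
    (lip : ∀ u v, ‖gh u - gh v‖ ≤ L * ‖u - v‖) (u v : H) :
    h (u + v) ≤ h u + ⟪gh u, v⟫ + L / 2 * ‖v‖ ^ 2 := by
  have hd : ∀ t ∈ Set.Icc (0:ℝ) 1,
      HasDerivAt (fun t : ℝ => h (u + t • v)) ⟪gh (u + t • v), v⟫ t := by
    intro t _
    have hline : HasDerivAt (fun t : ℝ => u + t • v) v t := by
      simpa using ((hasDerivAt_id t).smul_const v).const_add u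
    have := (hg (u + t • v)).hasFDerivAt.comp_hasDerivAt t hline
    simpa [InnerProductSpace.toDual_apply_apply, Function.comp_def] using this
  have hb : ∀ t ∈ Set.Icc (0:ℝ) 1,
      ⟪gh (u + t • v), v⟫ ≤ ⟪gh u, v⟫ + (L * ‖v‖ ^ 2) * t := by
    intro t ht
    have h1 : ⟪gh (u + t • v) - gh u, v⟫ ≤ ‖gh (u + t • v) - gh u‖ * ‖v‖ :=
      real_inner_le_norm _ _
    have h2 : ‖gh (u + t • v) - gh u‖ ≤ L * (t * ‖v‖) := by
      have := lip (u + t • v) u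
      simpa [norm_smul, abs_of_nonneg ht.1] using this
    have h3 : ⟪gh (u + t • v) - gh u, v⟫ = ⟪gh (u + t • v), v⟫ - ⟪gh u, v⟫ :=
      inner_sub_left _ _ _
    nlinarith [norm_nonneg v, norm_nonneg (gh (u + t • v) - gh u), ht.1]
  have := oneD hd hb
  simp only [one_smul, zero_smul, add_zero] at this
  nlinarith [this]

private lemma grad_sq_le {H : Type*} [NormedAddCommGroup H] [InnerProductSpace ℝ H]
    [CompleteSpace H] {h : H → ℝ} {gh : H → H} {L : ℝ} (hL : 0 < L)
    (hg : ∀ u, HasGradientAt h (gh u) u)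
    (lip : ∀ u v, ‖gh u - gh v‖ ≤ L * ‖u - v‖)
    {hstar : ℝ} (hlb : ∀ u, hstar ≤ h u) (u : H) :
    ‖gh u‖ ^ 2 ≤ 2 * L * (h u - hstar) := by
  have hdesc := descent_lemma hg lip u (-(L⁻¹ • gh u))
  have h1 : ⟪gh u, -(L⁻¹ • gh u)⟫ = -(L⁻¹ * ‖gh u‖ ^ 2) := by
    rw [inner_neg_right, real_inner_smul_right, real_inner_self_eq_norm_sq]
  have h2 : ‖-(L⁻¹ • gh u)‖ ^ 2 = L⁻¹ ^ 2 * ‖gh u‖ ^ 2 := by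
    rw [norm_neg, norm_smul, Real.norm_eq_abs, abs_of_nonneg (by positivity : (0:ℝ) ≤ L⁻¹)]
    ring
  have h3 := hlb (u + -(L⁻¹ • gh u))
  rw [h1, h2] at hdesc
  have e : L / 2 * (L⁻¹ ^ 2 * ‖gh u‖ ^ 2) = L⁻¹ / 2 * ‖gh u‖ ^ 2 := by
    field_simp
  rw [e] at hdesc
  have h4 : L⁻¹ / 2 * ‖gh u‖ ^ 2 ≤ h u - hstar := by linarith
  calc ‖gh u‖ ^ 2 = 2 * L * (L⁻¹ / 2 * ‖gh u‖ ^ 2) := by field_simp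
    _ ≤ 2 * L * (h u - hstar) := by
        apply mul_le_mul_of_nonneg_left h4 (by positivity)

private lemma final_arith {β Lf LF Lh N A D2 : ℝ} (hβ : 0 < β) (hLF : 0 < LF)
    (hLh : 0 < Lh) (hβLf : Lf < β) (hN : 0 ≤ N) (hD2 : 0 ≤ D2) (hLfD2 : 0 ≤ Lf * D2)
    (h1 : N ^ 2 ≤ 2 * Lh * A - (2 * β - Lf) * Lh * D2)
    (h2 : 2 * LF ^ 2 * Lh * A ≤ (β - Lf) ^ 2) :
    N ≤ (β - Lf) / LF - LF * Lh * D2 := by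
  have hP : (0:ℝ) < β - Lf := sub_pos.mpr hβLf
  have hPβ : (0:ℝ) < (β - Lf) + β := by linarith
  have hq : (2 * β - Lf) * Lh * D2 ≤ 2 * Lh * A := by nlinarith [sq_nonneg N]
  have hq2 : LF ^ 2 * ((2 * β - Lf) * Lh * D2) ≤ LF ^ 2 * (2 * Lh * A) :=
    mul_le_mul_of_nonneg_left hq (sq_nonneg LF)
  have hc : LF ^ 2 * Lh * D2 ≤ β - Lf := by
    nlinarith [hq2, h2, mul_pos hP hβ,
      mul_nonneg (mul_nonneg (sq_nonneg LF) hLh.le) hD2]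
  have hfin2 : (LF * N) ^ 2 ≤ ((β - Lf) - LF ^ 2 * Lh * D2) ^ 2 := by
    have t1 := mul_le_mul_of_nonneg_left h1 (sq_nonneg LF)
    have t2 : 0 ≤ LF ^ 2 * Lh * (Lf * D2) :=
      mul_nonneg (mul_nonneg (sq_nonneg LF) hLh.le) hLfD2
    nlinarith [t1, h2, t2, sq_nonneg (LF ^ 2 * Lh * D2)]
  have hcge : 0 ≤ (β - Lf) - LF ^ 2 * Lh * D2 := by linarith
  have hfin : LF * N ≤ (β - Lf) - LF ^ 2 * Lh * D2 :=
    (pow_le_pow_iff_left₀ (mul_nonneg hLF.le hN) hcge two_ne_zero).mp hfin2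
  have hdiv : N ≤ ((β - Lf) - LF ^ 2 * Lh * D2) / LF := by
    rw [le_div_iff₀ hLF]
    nlinarith [hfin]
  calc N ≤ ((β - Lf) - LF ^ 2 * Lh * D2) / LF := hdiv
    _ = (β - Lf) / LF - LF * Lh * D2 := by
        field_simp

set_option maxHeartbeats 1000000

/-- inner estimate in Lemma 3.1: under the step-size condition
`β ≥ L^f_i + L^F_i √(2L_h) √(φ(x) − φ^*)`, at a global minimizer `sp` of the
regularized block model one has
`‖∇h(l^i_F(sp;x))‖ ≤ (β − L^f_i)/L^F_i − L^F_i L_h ‖x₊ − x‖²`. -/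
theorem gradient_norm_bound_at_linearization
    {b m : ℕ} (hb : 0 < b) (hm : 0 < m) {n : Fin b → ℕ} (hn : ∀ i, 0 < n i)
    (f : PiLp 2 (fun i => EuclideanSpace ℝ (Fin (n i))) → ℝ)
    (hf : Differentiable ℝ f)
    (F : PiLp 2 (fun i => EuclideanSpace ℝ (Fin (n i))) → EuclideanSpace ℝ (Fin m))
    (hF : Differentiable ℝ F)
    (h : EuclideanSpace ℝ (Fin m) → ℝ)
    (hhconv : ConvexOn ℝ Set.univ h) (hhdiff : Differentiable ℝ h)
    (Lh : ℝ) (hLh : 0 < Lh)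
    (gradh : EuclideanSpace ℝ (Fin m) → EuclideanSpace ℝ (Fin m))
    (hgradh : ∀ u, HasGradientAt h (gradh u) u)
    (hgradhLip : ∀ u v, ‖gradh u - gradh v‖ ≤ Lh * ‖u - v‖)
    (g : (i : Fin b) → EuclideanSpace ℝ (Fin (n i)) → ℝ)
    (hg : ∀ i, ConvexOn ℝ Set.univ (g i))
    -- lower bounds `f ≥ f^*`, `h ≥ h^*`, `Σᵢ gᵢ ≥ g^*`; `φ^* = f^* + h^* + g^*`
    (fstar hstar gstar : ℝ)
    (hfstar : ∀ y, fstar ≤ f y) (hhstar : ∀ u, hstar ≤ h u)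
    (hgstar : ∀ y : PiLp 2 (fun i => EuclideanSpace ℝ (Fin (n i))), gstar ≤ ∑ j, g j (y j))
    (x : PiLp 2 (fun i => EuclideanSpace ℝ (Fin (n i)))) (i : Fin b)
    (β Lf LF : ℝ) (hβ : 0 < β) (hLF : 0 < LF) (hβLf : Lf < β)
    -- `gif y = ∇_i f(y)`, the gradient at `y^i` of `s ↦ f(y[i ↦ s])`
    (gif : PiLp 2 (fun i => EuclideanSpace ℝ (Fin (n i))) → EuclideanSpace ℝ (Fin (n i)))
    (hgif : ∀ y, HasGradientAt (fun s => f (upd y i s)) (gif y) (y i))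
    -- `GiF y = ∇_i F(y)`, the Fréchet derivative at `y^i` of `s ↦ F(y[i ↦ s])`
    (GiF : PiLp 2 (fun i => EuclideanSpace ℝ (Fin (n i))) →
      (EuclideanSpace ℝ (Fin (n i)) →L[ℝ] EuclideanSpace ℝ (Fin m)))
    (hGiF : ∀ y, HasFDerivAt (fun s => F (upd y i s)) (GiF y) (y i))
    -- step-size condition `β ≥ L^f_i + L^F_i √(2 L_h) √(φ(x) − φ^*)`
    (hβcond : Lf + LF * Real.sqrt (2 * Lh) *
        Real.sqrt ((f x + h (F x) + ∑ j, g j (x j)) - (fstar + hstar + gstar)) ≤ β)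
    -- `sp` is a global minimizer of `q_β(s) = φ̄^i(s;x) + (β/2)‖s − x^i‖²`
    (sp : EuclideanSpace ℝ (Fin (n i)))
    (hmin : ∀ t,
      (f x + ⟪gif x, sp - x i⟫ + h (F x + GiF x (sp - x i)) + g i sp)
          + β / 2 * ‖sp - x i‖ ^ 2
        ≤ (f x + ⟪gif x, t - x i⟫ + h (F x + GiF x (t - x i)) + g i t)
          + β / 2 * ‖t - x i‖ ^ 2)
    -- `C` is a convex set containing `x` and `x₊ = x[i ↦ sp]`, on which the block
    -- gradients of `f` and `F` are Lipschitz
    (C : Set (PiLp 2 (fun i => EuclideanSpace ℝ (Fin (n i)))))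
    (hC : Convex ℝ C) (hxC : x ∈ C) (hxpC : upd x i sp ∈ C)
    (hgifLip : ∀ y ∈ C, ∀ z ∈ C, ‖gif y - gif z‖ ≤ Lf * ‖y - z‖)
    (hGiFLip : ∀ y ∈ C, ∀ z ∈ C, ‖GiF y - GiF z‖ ≤ LF * ‖y - z‖) :
    ‖gradh (F x + GiF x (sp - x i))‖
      ≤ (β - Lf) / LF - LF * Lh * ‖upd x i sp - x‖ ^ 2 := by

  classical
  set xp := upd x i sp with hxpdef
  have hxpi : xp i = sp := by
    simp [hxpdef, upd]
  have hxpj : ∀ j, j ≠ i → xp j = x j := by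
    intro j hj
    simp [hxpdef, upd, Function.update_of_ne hj]
  -- norm of the block update
  have hnorm : ‖xp - x‖ = ‖sp - x i‖ := by
    have h1 : ‖xp - x‖ ^ 2 = ‖sp - x i‖ ^ 2 := by
      rw [PiLp.norm_sq_eq_of_L2]
      rw [Finset.sum_eq_single i
        (fun j _ hj => by rw [PiLp.sub_apply, hxpj j hj, sub_self]; simp)
        (fun hne => absurd (Finset.mem_univ i) hne)]
      rw [PiLp.sub_apply, hxpi]
    have h2 := Real.sqrt_sq (norm_nonneg (xp - x))
    have h3 := Real.sqrt_sq (norm_nonneg (sp - x i))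
    rw [← h2, ← h3, h1]
  -- segment description
  have hseg : ∀ t : ℝ, upd x i (x i + t • (sp - x i)) = x + t • (xp - x) := by
    intro t
    refine PiLp.ext (fun j => ?_)
    by_cases hj : j = i
    · subst hj
      show Function.update x j (x j + t • (sp - x j)) j = (x + t • (xp - x)) j
      rw [Function.update_self, PiLp.add_apply, PiLp.smul_apply, PiLp.sub_apply, hxpi]
    · show Function.update x i (x i + t • (sp - x i)) j = (x + t • (xp - x)) j
      rw [Function.update_of_ne hj, PiLp.add_apply, PiLp.smul_apply, PiLp.sub_apply,
        hxpj j hj]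
      simp
  have hytC : ∀ t : ℝ, t ∈ Set.Icc (0:ℝ) 1 → upd x i (x i + t • (sp - x i)) ∈ C := by
    intro t ht
    rw [hseg t]
    exact hC.add_smul_sub_mem hxC hxpC ht
  have hytnorm : ∀ t : ℝ, 0 ≤ t →
      ‖upd x i (x i + t • (sp - x i)) - x‖ = t * ‖sp - x i‖ := by
    intro t ht
    rw [hseg t, add_sub_cancel_left, norm_smul, Real.norm_eq_abs, abs_of_nonneg ht, hnorm]
  -- Lf * D² is nonnegative
  have hLfD2 : 0 ≤ Lf * ‖sp - x i‖ ^ 2 := by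
    rcases eq_or_ne sp (x i) with he | he
    · rw [he]
      simp
    · have hD : 0 < ‖sp - x i‖ := by
        rw [norm_pos_iff]
        exact sub_ne_zero_of_ne he
      have h1 := (norm_nonneg (gif xp - gif x)).trans (hgifLip xp hxpC x hxC)
      rw [hnorm] at h1
      have hLf : 0 ≤ Lf := by nlinarith
      positivity
  -- descent lemma for f along the block segment
  have hfdesc : f xp ≤ f x + ⟪gif x, sp - x i⟫ + Lf * ‖sp - x i‖ ^ 2 / 2 := by
    have hd0 : ∀ t ∈ Set.Icc (0:ℝ) 1,
        HasDerivAt (fun t : ℝ => f (upd x i (x i + t • (sp - x i))))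
          ⟪gif (upd x i (x i + t • (sp - x i))), sp - x i⟫ t := by
      intro t _
      have hline : HasDerivAt (fun t : ℝ => x i + t • (sp - x i)) (sp - x i) t := by
        simpa using ((hasDerivAt_id t).smul_const (sp - x i)).const_add (x i)
      have h0 := hgif (upd x i (x i + t • (sp - x i)))
      have e1 : (upd x i (x i + t • (sp - x i))) i = x i + t • (sp - x i) := by
        simp [upd]
      have e2 : (fun s => f (upd (upd x i (x i + t • (sp - x i))) i s))
          = fun s => f (upd x i s) := by
        funext s
        simp [upd, Function.update_idem]
      rw [e1, e2] at h0
      have := h0.hasFDerivAt.comp_hasDerivAt t hline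
      simpa [InnerProductSpace.toDual_apply_apply, Function.comp_def] using this
    have hb0 : ∀ t ∈ Set.Icc (0:ℝ) 1,
        ⟪gif (upd x i (x i + t • (sp - x i))), sp - x i⟫
          ≤ ⟪gif x, sp - x i⟫ + (Lf * ‖sp - x i‖ ^ 2) * t := by
      intro t ht
      have h1 : ⟪gif (upd x i (x i + t • (sp - x i))) - gif x, sp - x i⟫
          ≤ ‖gif (upd x i (x i + t • (sp - x i))) - gif x‖ * ‖sp - x i‖ :=
        real_inner_le_norm _ _
      have h2 : ‖gif (upd x i (x i + t • (sp - x i))) - gif x‖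
          ≤ Lf * (t * ‖sp - x i‖) := by
        have := hgifLip (upd x i (x i + t • (sp - x i))) (hytC t ht) x hxC
        rwa [hytnorm t ht.1] at this
      have h3 : ⟪gif (upd x i (x i + t • (sp - x i))) - gif x, sp - x i⟫
          = ⟪gif (upd x i (x i + t • (sp - x i))), sp - x i⟫ - ⟪gif x, sp - x i⟫ :=
        inner_sub_left _ _ _
      nlinarith [norm_nonneg (sp - x i),
        norm_nonneg (gif (upd x i (x i + t • (sp - x i))) - gif x), ht.1]
    have hcon := oneD hd0 hb0
    have e3 : upd x i (x i + (1:ℝ) • (sp - x i)) = xp := by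
      rw [show x i + (1:ℝ) • (sp - x i) = sp from by module]
    have e4 : upd x i (x i + (0:ℝ) • (sp - x i)) = x := by
      simp [upd]
    rw [e3, e4] at hcon
    linarith
  -- strong-convexity inequality for the minimizer
  have hscvx : ⟪gif x, sp - x i⟫ + h (F x + GiF x (sp - x i)) + g i sp
      + β * ‖sp - x i‖ ^ 2 ≤ h (F x) + g i (x i) := by
    apply le_add_eps
    intro ε hε
    set τ : ℝ := min 1 (ε / (β / 2 * ‖sp - x i‖ ^ 2 + 1)) with hτdef
    have hτpos : 0 < τ := lt_min one_pos (div_pos hε (by positivity))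
    have hτ1 : τ ≤ 1 := min_le_left _ _
    have hτε : β / 2 * τ * ‖sp - x i‖ ^ 2 ≤ ε := by
      have h1 : τ ≤ ε / (β / 2 * ‖sp - x i‖ ^ 2 + 1) := min_le_right _ _
      have h2 : (0:ℝ) ≤ β / 2 * ‖sp - x i‖ ^ 2 := by positivity
      have h5 : (0:ℝ) < β / 2 * ‖sp - x i‖ ^ 2 + 1 := by positivity
      have h3 : β / 2 * τ * ‖sp - x i‖ ^ 2
          ≤ (β / 2 * ‖sp - x i‖ ^ 2) * (ε / (β / 2 * ‖sp - x i‖ ^ 2 + 1)) := by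
        nlinarith [mul_le_mul_of_nonneg_left h1 h2]
      have h4 : (β / 2 * ‖sp - x i‖ ^ 2) * (ε / (β / 2 * ‖sp - x i‖ ^ 2 + 1)) ≤ ε := by
        rw [mul_comm, div_mul_eq_mul_div, div_le_iff₀ h5]
        nlinarith [hε.le, h2]
      linarith
    have hkey := hmin (sp + τ • (x i - sp))
    have e1 : sp + τ • (x i - sp) - x i = (1 - τ) • (sp - x i) := by module
    have e5 : sp + τ • (x i - sp) = (1 - τ) • sp + τ • x i := by module
    have e6 : ‖(1 - τ) • (sp - x i)‖ ^ 2 = (1 - τ) ^ 2 * ‖sp - x i‖ ^ 2 := by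
      rw [norm_smul, mul_pow, Real.norm_eq_abs, sq_abs]
    rw [e1, ContinuousLinearMap.map_smul, real_inner_smul_right, e5, e6] at hkey
    have e4 : F x + (1 - τ) • GiF x (sp - x i)
        = (1 - τ) • (F x + GiF x (sp - x i)) + τ • F x := by module
    rw [e4] at hkey
    have hh := hhconv.2 (Set.mem_univ (F x + GiF x (sp - x i))) (Set.mem_univ (F x))
      (by linarith : (0:ℝ) ≤ 1 - τ) hτpos.le (by ring)
    have hgc := (hg i).2 (Set.mem_univ sp) (Set.mem_univ (x i))
      (by linarith : (0:ℝ) ≤ 1 - τ) hτpos.le (by ring)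
    simp only [smul_eq_mul] at hh hgc
    nlinarith [hkey, hh, hgc, hτpos, hτε, mul_pos hτpos hε]
  -- sum of g decomposition
  have hgsum : gstar ≤ (∑ j, g j (x j)) - g i (x i) + g i sp := by
    have h0 := hgstar xp
    have efun : (fun j => g j (xp j)) = Function.update (fun j => g j (x j)) i (g i sp) := by
      funext j
      by_cases hj : j = i
      · subst hj
        rw [Function.update_self, hxpi]
      · rw [Function.update_of_ne hj, hxpj j hj]
    have e1 : ∑ j, g j (xp j) = g i sp + ∑ j ∈ Finset.univ \ {i}, g j (x j) := by
      rw [efun]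
      exact Finset.sum_update_of_mem (Finset.mem_univ i) _ _
    have e2 : ∑ j, g j (x j) = g i (x i) + ∑ j ∈ Finset.univ \ {i}, g j (x j) := by
      conv_lhs => rw [show (fun j => g j (x j))
        = Function.update (fun j => g j (x j)) i (g i (x i)) from
          (Function.update_eq_self i _).symm]
      exact Finset.sum_update_of_mem (Finset.mem_univ i) _ _
    rw [e1] at h0
    linarith [h0, e2]
  -- gradient self-bounding
  have hN2 : ‖gradh (F x + GiF x (sp - x i))‖ ^ 2
      ≤ 2 * Lh * (h (F x + GiF x (sp - x i)) - hstar) :=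
    grad_sq_le hLh hgradh hgradhLip hhstar _
  have hA0 : 0 ≤ (f x + h (F x) + ∑ j, g j (x j)) - (fstar + hstar + gstar) := by
    have h1 := hfstar x
    have h2 := hhstar (F x)
    have h3 := hgstar x
    linarith
  have hsq : 2 * LF ^ 2 * Lh *
      ((f x + h (F x) + ∑ j, g j (x j)) - (fstar + hstar + gstar)) ≤ (β - Lf) ^ 2 := by
    have h1 : LF * Real.sqrt (2 * Lh) *
        Real.sqrt ((f x + h (F x) + ∑ j, g j (x j)) - (fstar + hstar + gstar))
          ≤ β - Lf := by linarith [hβcond]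
    have h2 := Real.sqrt_nonneg (2 * Lh)
    have h3 : Real.sqrt (2 * Lh) ^ 2 = 2 * Lh := Real.sq_sqrt (by positivity)
    have h4 : Real.sqrt ((f x + h (F x) + ∑ j, g j (x j)) - (fstar + hstar + gstar)) ^ 2
        = (f x + h (F x) + ∑ j, g j (x j)) - (fstar + hstar + gstar) := Real.sq_sqrt hA0
    have h5 := Real.sqrt_nonneg ((f x + h (F x) + ∑ j, g j (x j)) - (fstar + hstar + gstar))
    have e : (LF * Real.sqrt (2 * Lh) *
        Real.sqrt ((f x + h (F x) + ∑ j, g j (x j)) - (fstar + hstar + gstar))) ^ 2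
        = 2 * LF ^ 2 * Lh *
          ((f x + h (F x) + ∑ j, g j (x j)) - (fstar + hstar + gstar)) := by
      rw [mul_pow, mul_pow, h3, h4]
      ring
    have h6 := mul_self_le_mul_self
      (mul_nonneg (mul_nonneg hLF.le h2) h5) h1
    nlinarith [h6, e]
  -- bound on h at the linearization
  have hhu : h (F x + GiF x (sp - x i)) - hstar
      ≤ ((f x + h (F x) + ∑ j, g j (x j)) - (fstar + hstar + gstar))
        - (β - Lf / 2) * ‖sp - x i‖ ^ 2 := by
    have h1 := hfstar xp
    nlinarith [hscvx, hfdesc, hgsum, h1]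
  have hN2' : ‖gradh (F x + GiF x (sp - x i))‖ ^ 2
      ≤ 2 * Lh * ((f x + h (F x) + ∑ j, g j (x j)) - (fstar + hstar + gstar))
        - (2 * β - Lf) * Lh * ‖sp - x i‖ ^ 2 := by
    have h1 := mul_le_mul_of_nonneg_left hhu (by positivity : (0:ℝ) ≤ 2 * Lh)
    nlinarith [hN2, h1]
  -- final assembly
  rw [hnorm]
  exact final_arith hβ hLF hLh hβLf (norm_nonneg _) (by positivity) hLfD2 hN2' hsq
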